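/- Suppose ‖L‖ ≤ η̄‖R(X)‖ and β ∈ (0, 1−η̄). Then the sufficient decrease condition ‖R(X+ξS)‖ ≤ (1−ξβ)‖R(X)‖ holds for all step sizes ξ with 0 < ξ ≤ (1−η̄−β)‖R(X)‖/‖MSBBᵀSM‖, where R(X+ξS) = (1−ξ)R(X) + ξL − ξ²MSBBᵀSM and L = R'(X)S + R(X). -/
import Mathlib

open Matrix

attribute [local instance] Matrix.frobeniusSeminormedAddCommGroup
attribute [local instance] Matrix.frobeniusNormedAddCommGroup
attribute [local instance] Matrix.frobeniusNormedSpace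

theorem stmt_11 {n m q : ℕ}
    (A M X S : Matrix (Fin n) (Fin n) ℝ)
    (B : Matrix (Fin n) (Fin m) ℝ) (C : Matrix (Fin q) (Fin n) ℝ)
    (hM : Mᵀ = M) (hX : Xᵀ = X) (hS : Sᵀ = S)
    (R : Matrix (Fin n) (Fin n) ℝ → Matrix (Fin n) (Fin n) ℝ)
    (hR : ∀ Y, R Y = Cᵀ * C + Aᵀ * Y * M + M * Y * A - M * Y * B * Bᵀ * Y * M)
    (L : Matrix (Fin n) (Fin n) ℝ)
    (hL : L = (A - B * Bᵀ * X * M)ᵀ * S * M + M * S * (A - B * Bᵀ * X * M) + R X)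
    (η β : ℝ) (hη : 0 < η) (hη1 : η < 1) (hβ : 0 < β) (hβ1 : β < 1 - η)
    (hLsmall : ‖L‖ ≤ η * ‖R X‖)
    (hNne : M * S * B * Bᵀ * S * M ≠ 0)
    (ξ : ℝ) (hξ0 : 0 < ξ) (hξ1 : ξ ≤ 1)
    (hξ : ξ ≤ (1 - η - β) * ‖R X‖ / ‖M * S * B * Bᵀ * S * M‖) :
    ‖R (X + ξ • S)‖ ≤ (1 - ξ * β) * ‖R X‖ := by
  set N := M * S * B * Bᵀ * S * M with hN
  have key : R (X + ξ • S) = (1-ξ) • R X + ξ • L - (ξ^2) • N := by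
    rw [hL, hR, hR]
    simp only [Matrix.transpose_mul, Matrix.transpose_sub, hM, hX, hS,
      Matrix.add_mul, Matrix.mul_add, Matrix.smul_mul, Matrix.mul_smul,
      Matrix.sub_mul, Matrix.mul_sub, smul_sub, smul_add, smul_smul, Matrix.transpose_transpose, hN, Matrix.mul_assoc]
    module
  rw [key]
  have hNpos : 0 < ‖N‖ := norm_pos_iff.mpr hNne
  have h1 : ξ * ‖N‖ ≤ (1 - η - β) * ‖R X‖ := (le_div_iff₀ hNpos).mp hξ
  have h2 : ‖(1-ξ) • R X + ξ • L - (ξ^2) • N‖ ≤ ‖(1-ξ) • R X‖ + ‖ξ • L‖ + ‖(ξ^2) • N‖ := by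
    calc _ ≤ ‖(1-ξ) • R X + ξ • L‖ + ‖(ξ^2) • N‖ := norm_sub_le _ _
    _ ≤ _ := by gcongr; exact norm_add_le _ _
  rw [norm_smul, norm_smul, norm_smul] at h2
  simp only [Real.norm_eq_abs, abs_of_nonneg hξ0.le, abs_of_nonneg (by linarith : (0:ℝ) ≤ 1 - ξ), abs_of_nonneg (sq_nonneg ξ)] at h2
  have hRnn : 0 ≤ ‖R X‖ := norm_nonneg _
  nlinarith [mul_le_mul_of_nonneg_left hLsmall hξ0.le, mul_le_mul_of_nonneg_left h1 hξ0.le]
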